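/- Let d ≥ 1 and let A : (Fin d → ℝ) → Matrix (Fin d) (Fin d) ℝ be such that A v is a graph Laplacian whenever v ⪰ 0. Let h ≥ 0, and let y₀ ∈ ℝ^d satisfy y₀ ⪰ 0 and ∑_i (y₀)_i = 1. Then the second-order exponential midpoint update y₁ = exp(h·A(exp((h/2)·A y₀) *ᵥ y₀)) *ᵥ y₀ satisfies y₁ ⪰ 0 and ∑_i (y₁)_i = 1. -/

import Mathlib

open Matrix

/-- An `n × n` real matrix is a graph Laplacian if its off-diagonal entries are
nonnegative, its diagonal entries are nonpositive, and each column sums to zero. -/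
def IsGraphLaplacian {n : ℕ} (A : Matrix (Fin n) (Fin n) ℝ) : Prop :=
  (∀ k ℓ : Fin n, k ≠ ℓ → 0 ≤ A k ℓ) ∧ (∀ k : Fin n, A k k ≤ 0) ∧
    (∀ ℓ : Fin n, ∑ k : Fin n, A k ℓ = 0)

section Aux

variable {n : ℕ}

lemma aux_pow_entry_nonneg {M : Matrix (Fin n) (Fin n) ℝ} (hM : ∀ i j, 0 ≤ M i j) :
    ∀ k (i j : Fin n), 0 ≤ (M ^ k) i j := by
  intro k
  induction k with
  | zero =>
    intro i j
    rw [pow_zero]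
    by_cases h : i = j <;> simp [Matrix.one_apply, h]
  | succ k ih =>
    intro i j
    rw [pow_succ, Matrix.mul_apply]
    exact Finset.sum_nonneg fun l _ => mul_nonneg (ih i l) (hM l j)

lemma aux_exp_summable (M : Matrix (Fin n) (Fin n) ℝ) :
    Summable (fun k : ℕ => (k.factorial : ℝ)⁻¹ • M ^ k) := by
  letI : SeminormedRing (Matrix (Fin n) (Fin n) ℝ) := Matrix.linftyOpSemiNormedRing
  letI : NormedRing (Matrix (Fin n) (Fin n) ℝ) := Matrix.linftyOpNormedRing
  letI : NormedAlgebra ℝ (Matrix (Fin n) (Fin n) ℝ) := Matrix.linftyOpNormedAlgebra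
  exact NormedSpace.expSeries_summable' (𝕂 := ℝ) M

lemma aux_exp_entry (M : Matrix (Fin n) (Fin n) ℝ) (i j : Fin n) :
    NormedSpace.exp M i j = ∑' k : ℕ, ((k.factorial : ℝ)⁻¹ • M ^ k) i j := by
  have hs := aux_exp_summable M
  rw [NormedSpace.exp_eq_tsum (𝕂 := ℝ)]
  show (∑' k : ℕ, (k.factorial : ℝ)⁻¹ • M ^ k) i j = _
  erw [tsum_apply hs, tsum_apply (Pi.summable.1 hs i)]

lemma aux_exp_entry_nonneg {M : Matrix (Fin n) (Fin n) ℝ} (hM : ∀ i j, 0 ≤ M i j)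
    (i j : Fin n) : 0 ≤ NormedSpace.exp M i j := by
  rw [aux_exp_entry]
  refine tsum_nonneg fun k => ?_
  have : ((k.factorial : ℝ)⁻¹ • M ^ k) i j = (k.factorial : ℝ)⁻¹ * (M ^ k) i j := rfl
  rw [this]
  exact mul_nonneg (by positivity) (aux_pow_entry_nonneg hM k i j)

lemma aux_exp_laplacian_entry_nonneg {M : Matrix (Fin n) (Fin n) ℝ}
    (hoff : ∀ i j, i ≠ j → 0 ≤ M i j) (hdiag : ∀ i, M i i ≤ 0) (i j : Fin n) :
    0 ≤ NormedSpace.exp M i j := by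
  letI : SeminormedRing (Matrix (Fin n) (Fin n) ℝ) := Matrix.linftyOpSemiNormedRing
  letI : NormedRing (Matrix (Fin n) (Fin n) ℝ) := Matrix.linftyOpNormedRing
  letI : NormedAlgebra ℝ (Matrix (Fin n) (Fin n) ℝ) := Matrix.linftyOpNormedAlgebra
  set c : ℝ := ∑ k : Fin n, (-M k k) with hc
  have hc0 : 0 ≤ c := Finset.sum_nonneg fun k _ => neg_nonneg.2 (hdiag k)
  set N : Matrix (Fin n) (Fin n) ℝ := M + c • (1 : Matrix (Fin n) (Fin n) ℝ) with hN
  have hNpos : ∀ i j, 0 ≤ N i j := by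
    intro a b
    by_cases hab : a = b
    · subst hab
      have h1 : N a a = M a a + c := by simp [hN, Matrix.one_apply]
      have h2 : -M a a ≤ c := by
        rw [hc]
        exact Finset.single_le_sum (f := fun k => -M k k)
          (fun k _ => neg_nonneg.2 (hdiag k)) (Finset.mem_univ a)
      rw [h1]; linarith
    · have h1 : N a b = M a b := by simp [hN, Matrix.one_apply, hab]
      rw [h1]; exact hoff a b hab
  have hsplit : NormedSpace.exp M
      = NormedSpace.exp N * NormedSpace.exp ((-c) • (1 : Matrix (Fin n) (Fin n) ℝ)) := by
    rw [← Matrix.exp_add_of_commute]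
    · congr 1
      rw [hN, neg_smul]
      abel
    · exact (Commute.one_right N).smul_right (-c)
  have hscal : NormedSpace.exp ((-c) • (1 : Matrix (Fin n) (Fin n) ℝ))
      = Real.exp (-c) • (1 : Matrix (Fin n) (Fin n) ℝ) := by
    have h1 : ((-c) • (1 : Matrix (Fin n) (Fin n) ℝ))
        = algebraMap ℝ (Matrix (Fin n) (Fin n) ℝ) (-c) := by
      rw [Algebra.algebraMap_eq_smul_one]
    erw [h1, ← NormedSpace.algebraMap_exp_comm, Algebra.algebraMap_eq_smul_one,
      ← Real.exp_eq_exp_ℝ]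
  rw [hsplit, hscal]
  have : (NormedSpace.exp N * (Real.exp (-c) • (1 : Matrix (Fin n) (Fin n) ℝ))) i j
      = Real.exp (-c) * NormedSpace.exp N i j := by
    rw [mul_smul_comm, mul_one]
    rfl
  rw [this]
  exact mul_nonneg (Real.exp_nonneg _) (aux_exp_entry_nonneg hNpos i j)

lemma aux_colsum_pow {M : Matrix (Fin n) (Fin n) ℝ} (hcol : ∀ j, ∑ i, M i j = 0) :
    ∀ k (j : Fin n), ∑ i, (M ^ (k + 1)) i j = 0 := by
  intro k
  induction k with
  | zero => simpa using hcol
  | succ k ih =>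
    intro j
    have hp : M ^ (k + 1 + 1) = M ^ (k + 1) * M := pow_succ M (k + 1)
    simp only [hp, Matrix.mul_apply]
    rw [Finset.sum_comm]
    have : ∀ l : Fin n, ∑ i, (M ^ (k + 1)) i l * M l j = 0 := by
      intro l
      rw [← Finset.sum_mul, ih l, zero_mul]
    simp [this]

lemma aux_colsum_exp {M : Matrix (Fin n) (Fin n) ℝ} (hcol : ∀ j, ∑ i, M i j = 0)
    (j : Fin n) : ∑ i, NormedSpace.exp M i j = 1 := by
  have hs := aux_exp_summable M
  have hsij : ∀ i : Fin n, Summable fun k : ℕ => ((k.factorial : ℝ)⁻¹ • M ^ k) i j :=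
    fun i => Pi.summable.1 (Pi.summable.1 hs i) j
  simp only [aux_exp_entry]
  rw [← Summable.tsum_finsetSum fun i _ => hsij i]
  have hterm : ∀ k : ℕ, k ≠ 0 → ∑ i, ((k.factorial : ℝ)⁻¹ • M ^ k) i j = 0 := by
    intro k hk
    obtain ⟨m, rfl⟩ := Nat.exists_eq_succ_of_ne_zero hk
    have : ∀ i : Fin n, ((((m + 1).factorial : ℝ))⁻¹ • M ^ (m + 1)) i j
        = (((m + 1).factorial : ℝ))⁻¹ * (M ^ (m + 1)) i j := fun i => rfl
    simp only [this, ← Finset.mul_sum, aux_colsum_pow hcol m j, mul_zero]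
  rw [tsum_eq_single 0 hterm]
  have h0 : ∀ i : Fin n, ((Nat.factorial 0 : ℝ)⁻¹ • M ^ 0) i j = (1 : Matrix (Fin n) (Fin n) ℝ) i j := by
    intro i
    simp
  simp only [h0]
  simp [Matrix.one_apply, Finset.sum_ite_eq, Finset.mem_univ]

/-- Key lemma: `exp M` preserves nonnegativity and mass when `M` has nonnegative
off-diagonal entries and zero column sums. -/
lemma aux_exp_preserves {M : Matrix (Fin n) (Fin n) ℝ}
    (hoff : ∀ i j, i ≠ j → 0 ≤ M i j) (hcol : ∀ j, ∑ i, M i j = 0)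
    {v : Fin n → ℝ} (hv : ∀ i, 0 ≤ v i) :
    (∀ i, 0 ≤ (NormedSpace.exp M *ᵥ v) i) ∧
      ∑ i, (NormedSpace.exp M *ᵥ v) i = ∑ i, v i := by
  have hdiag : ∀ i, M i i ≤ 0 := by
    intro i
    have h1 := hcol i
    have h2 : ∑ k, M k i = M i i + ∑ k ∈ Finset.univ.erase i, M k i := by
      rw [add_comm, Finset.sum_erase_add _ _ (Finset.mem_univ i)]
    have h3 : 0 ≤ ∑ k ∈ Finset.univ.erase i, M k i :=
      Finset.sum_nonneg fun k hk => hoff k i (Finset.ne_of_mem_erase hk)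
    linarith [h2 ▸ h1]
  have hE : ∀ i j, 0 ≤ NormedSpace.exp M i j := aux_exp_laplacian_entry_nonneg hoff hdiag
  constructor
  · intro i
    simp only [Matrix.mulVec, dotProduct]
    exact Finset.sum_nonneg fun j _ => mul_nonneg (hE i j) (hv j)
  · simp only [Matrix.mulVec, dotProduct]
    rw [Finset.sum_comm]
    refine Finset.sum_congr rfl fun j _ => ?_
    rw [← Finset.sum_mul, aux_colsum_exp hcol j, one_mul]

end Aux

/-- The second-order exponential midpoint (Magnus) update preserves positivity
and mass unconditionally. -/
theorem expMidpoint_preserves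
    {d : ℕ} (hd : 1 ≤ d)
    (A : (Fin d → ℝ) → Matrix (Fin d) (Fin d) ℝ)
    (hA : ∀ v : Fin d → ℝ, (∀ i, 0 ≤ v i) → IsGraphLaplacian (A v))
    (h : ℝ) (hh : 0 ≤ h)
    (y₀ : Fin d → ℝ) (hy₀ : ∀ i, 0 ≤ y₀ i) (hy₀sum : ∑ i : Fin d, y₀ i = 1)
    (y₁ : Fin d → ℝ)
    (hy₁ : y₁ = NormedSpace.exp
      (h • A (NormedSpace.exp ((h / 2) • A y₀) *ᵥ y₀)) *ᵥ y₀) :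
    (∀ i, 0 ≤ y₁ i) ∧ ∑ i : Fin d, y₁ i = 1 := by
  have smul_props : ∀ (t : ℝ), 0 ≤ t → ∀ (L : Matrix (Fin d) (Fin d) ℝ),
      IsGraphLaplacian L →
      (∀ i j, i ≠ j → 0 ≤ (t • L) i j) ∧ (∀ j, ∑ i, (t • L) i j = 0) := by
    intro t ht L hL
    obtain ⟨h1, h2, h3⟩ := hL
    constructor
    · intro i j hij
      exact mul_nonneg ht (h1 i j hij)
    · intro j
      simp only [Matrix.smul_apply, smul_eq_mul, ← Finset.mul_sum, h3 j, mul_zero]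
  -- midpoint
  obtain ⟨ho1, hc1⟩ := smul_props (h / 2) (by linarith) (A y₀) (hA y₀ hy₀)
  have hmid := aux_exp_preserves ho1 hc1 hy₀
  set ym := NormedSpace.exp ((h / 2) • A y₀) *ᵥ y₀ with hym
  obtain ⟨ho2, hc2⟩ := smul_props h hh (A ym) (hA ym hmid.1)
  have hfin := aux_exp_preserves ho2 hc2 hy₀
  rw [hy₁]
  exact ⟨hfin.1, hfin.2.trans hy₀sum⟩
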